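/- Let p be an odd prime, k ≥ (p-1)/2, d ≥ 2, and D = {α_1,...,α_{k+d}} ⊆ F_p a set of k+d distinct elements, with δ ∈ F_p \ D. Then for every γ ∈ F_p there exists a k-element subset {β_1,...,β_k} ⊆ D such that Σ_{i=1}^k 1/(δ - β_i) + γ = 0. -/
import Mathlib


open Finset

theorem stmt10 (p : ℕ) [Fact p.Prime] (hodd : Odd p) (k d : ℕ)
    (hk : (p - 1) / 2 ≤ k) (hd : 2 ≤ d)
    (D : Finset (ZMod p)) (hD : D.card = k + d)
    (δ : ZMod p) (hδ : δ ∉ D) (γ : ZMod p) :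
    ∃ T ⊆ D, T.card = k ∧ (∑ β ∈ T, (δ - β)⁻¹) + γ = 0 := by
  have hp : p ≤ 2 * k + 1 := by
    obtain ⟨m, hm⟩ := hodd
    subst hm
    have : (2 * m + 1 - 1) / 2 = m := by omega
    omega
  set f : ZMod p → ZMod p := fun β => (δ - β)⁻¹ with hf_def
  have hf : Function.Injective f := by
    intro a b hab
    have h2 := inv_injective hab
    have := sub_right_injective h2
    exact this
  -- pick U₀ ⊆ D of size d - 2
  obtain ⟨U₀, hU₀D, hU₀card⟩ := Finset.exists_subset_card_eq
    (show d - 2 ≤ D.card by omega)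
  set E : Finset (ZMod p) := D \ U₀ with hE_def
  have hEcard : E.card = k + 2 := by
    rw [hE_def, Finset.card_sdiff_of_subset hU₀D]
    omega
  set t : ZMod p := (∑ β ∈ D, f β) + γ - ∑ β ∈ U₀, f β with ht_def
  -- find a ≠ b in E with f a + f b = t
  have key : ∃ a ∈ E, ∃ b ∈ E, a ≠ b ∧ f a + f b = t := by
    set S : Finset (ZMod p) := E.image f with hS_def
    have hScard : S.card = k + 2 := by
      rw [hS_def, Finset.card_image_of_injective _ hf, hEcard]
    set S2 : Finset (ZMod p) := S.image (fun x => t - x) with hS2_def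
    have hS2card : S2.card = k + 2 := by
      rw [hS2_def, Finset.card_image_of_injective _ sub_right_injective, hScard]
    have hunion : (S ∪ S2).card ≤ p := by
      calc (S ∪ S2).card ≤ Fintype.card (ZMod p) := Finset.card_le_univ _
        _ = p := ZMod.card p
    have hinter : 3 ≤ (S ∩ S2).card := by
      have := Finset.card_inter_add_card_union S S2
      omega
    have h2 : (2 : ZMod p) ≠ 0 := by
      intro h
      have hd2 : p ∣ 2 := by
        have : ((2 : ℕ) : ZMod p) = 0 := by push_cast; exact h
        exact (ZMod.natCast_eq_zero_iff 2 p).mp this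
      have hle := Nat.le_of_dvd (by norm_num) hd2
      obtain ⟨m, hm⟩ := hodd
      have := (Fact.out : p.Prime).two_le
      omega
    have hBcard : ((S ∩ S2).filter (fun y => y + y = t)).card ≤ 1 := by
      apply Finset.card_le_one.mpr
      intro x hx y hy
      simp only [Finset.mem_filter] at hx hy
      have hx2 : x * 2 = t := by rw [mul_two]; exact hx.2
      have hy2 : y * 2 = t := by rw [mul_two]; exact hy.2
      exact mul_right_cancel₀ h2 (by rw [hx2, hy2])
    have : ((S ∩ S2) \ (S ∩ S2).filter (fun y => y + y = t)).Nonempty := by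
      apply Finset.card_pos.mp
      have hsd := Finset.card_sdiff_of_subset (Finset.filter_subset (fun y => y + y = t) (S ∩ S2))
      omega
    obtain ⟨x, hx⟩ := this
    rw [Finset.mem_sdiff] at hx
    obtain ⟨hxi, hxB⟩ := hx
    rw [Finset.mem_filter, not_and] at hxB
    have hxne : x + x ≠ t := hxB hxi
    have hxS : x ∈ S := (Finset.mem_inter.mp hxi).1
    have hxS2 : x ∈ S2 := (Finset.mem_inter.mp hxi).2
    obtain ⟨s, hsS, hs⟩ := Finset.mem_image.mp hxS2
    -- x = t - s, so s = t - x ∈ S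
    have hts : s = t - x := by rw [← hs]; ring
    obtain ⟨a, haE, ha⟩ := Finset.mem_image.mp hxS
    obtain ⟨b, hbE, hb⟩ := Finset.mem_image.mp hsS
    refine ⟨a, haE, b, hbE, ?_, ?_⟩
    · intro h
      apply hxne
      have hxs : x = t - x := by rw [← hts, ← hb, ← h, ha]
      calc x + x = x + (t - x) := by rw [← hxs]
        _ = t := by ring
    · rw [ha, hb, hts]; ring
  obtain ⟨a, haE, b, hbE, hab, habt⟩ := key
  refine ⟨E \ {a, b}, ?_, ?_, ?_⟩
  · exact (Finset.sdiff_subset).trans (Finset.sdiff_subset)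
  · rw [Finset.card_sdiff_of_subset (by
      intro x hx
      simp only [Finset.mem_insert, Finset.mem_singleton] at hx
      rcases hx with rfl | rfl <;> assumption)]
    rw [hEcard, Finset.card_insert_of_notMem (by simpa using hab),
      Finset.card_singleton]
    omega
  · have habsub : ({a, b} : Finset (ZMod p)) ⊆ E := by
      intro x hx
      simp only [Finset.mem_insert, Finset.mem_singleton] at hx
      rcases hx with rfl | rfl <;> assumption
    have hsum1 : ∑ β ∈ E \ {a, b}, f β = (∑ β ∈ E, f β) - (f a + f b) := by
      rw [eq_sub_iff_add_eq, Finset.sum_sdiff_eq_sub habsub]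
      rw [Finset.sum_pair hab]
      ring
    have hsum2 : ∑ β ∈ E, f β = (∑ β ∈ D, f β) - ∑ β ∈ U₀, f β := by
      rw [hE_def, Finset.sum_sdiff_eq_sub hU₀D]
    show (∑ β ∈ E \ {a, b}, f β) + γ = 0
    rw [hsum1, hsum2, habt, ht_def]
    ring
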